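/- arXiv:1502.07170 — 2 statements merged into one kernel-verified Lean document; each statement's English description precedes it below -/
import Mathlib

section
/- Let n ≥ 1 and let φ, f ∈ 𝒮(ℝⁿ) with φ ≠ 0. Then for all (x,ξ) ∈ ℝⁿ × ℝⁿ one has W_φ[Δf](x,ξ) = W_{Δφ} f(x,ξ) + 2 i ξ · ∇_x (W_φ f)(x,ξ) − |ξ|² W_φ f(x,ξ), where Δ denotes the Laplacian on ℝⁿ and ∇_x is the gradient of W_φ f(x,ξ) in the x-variable. -/
open MeasureTheory Complex Filter
open scoped RealInnerProductSpace ENNReal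

noncomputable section

/-- Euclidean space ℝⁿ. -/
abbrev Euc (n : ℕ) := EuclideanSpace ℝ (Fin n)

/-- Wave packet transform: `W_φ f (x, ξ) = ∫ conj (φ (y - x)) f y e^{-i y·ξ} dy`. -/
def wpt {n : ℕ} (φ f : Euc n → ℂ) (x ξ : Euc n) : ℂ :=
  ∫ y, (starRingEnd ℂ) (φ (y - x)) * f y * Complex.exp (-(Complex.I) * Complex.ofReal ⟪y, ξ⟫)

/-- The `j`-th partial derivative of a Schwartz function. -/
def pderivS {n : ℕ} (j : Fin n) (f : SchwartzMap (Euc n) ℂ) : SchwartzMap (Euc n) ℂ :=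
  LineDeriv.lineDerivOpCLM ℝ (SchwartzMap (Euc n) ℂ) (EuclideanSpace.single j (1 : ℝ)) f

/-- The Laplacian `Δ = ∑_j ∂_j²` of a Schwartz function. -/
def lapS {n : ℕ} (f : SchwartzMap (Euc n) ℂ) : SchwartzMap (Euc n) ℂ :=
  ∑ j : Fin n, pderivS j (pderivS j f)

/-! ### Auxiliary material -/

namespace WptAux

variable {n : ℕ}

/-- The exponential factor `e^{-i y·ξ}`. -/
def efac (ξ y : Euc n) : ℂ := Complex.exp (-(Complex.I) * Complex.ofReal ⟪y, ξ⟫)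

lemma norm_efac (ξ y : Euc n) : ‖efac ξ y‖ = 1 := by
  simp [efac, Complex.norm_exp]

lemma continuous_efac (ξ : Euc n) : Continuous (efac ξ) := by
  refine Complex.continuous_exp.comp ?_
  refine Continuous.mul continuous_const (Complex.continuous_ofReal.comp ?_)
  exact Continuous.inner continuous_id continuous_const

lemma hasFDerivAt_efac (ξ y : Euc n) :
    HasFDerivAt (efac ξ)
      (efac ξ y • ((-Complex.I) • (Complex.ofRealCLM.comp (innerSL ℝ ξ)))) y := by
  have h1 : HasFDerivAt (fun y : Euc n => ⟪y, ξ⟫) (innerSL ℝ ξ) y := by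
    have h0 := (innerSL ℝ ξ).hasFDerivAt (x := y)
    have heq : (fun y : Euc n => ⟪y, ξ⟫) = fun y : Euc n => (innerSL ℝ ξ) y := by
      funext z; rw [innerSL_apply_apply]; exact (real_inner_comm z ξ).symm
    rw [heq]; exact h0
  have h2 : HasFDerivAt (fun y : Euc n => ((⟪y, ξ⟫ : ℝ) : ℂ))
      (Complex.ofRealCLM.comp (innerSL ℝ ξ)) y := (Complex.ofRealCLM.hasFDerivAt).comp y h1
  have h3 := h2.const_mul (-Complex.I)
  exact h3.cexp

lemma efac_deriv_apply (ξ y : Euc n) (j : Fin n) :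
    (efac ξ y • ((-Complex.I) • (Complex.ofRealCLM.comp (innerSL ℝ ξ))))
      (EuclideanSpace.single j (1:ℝ)) = efac ξ y * (-Complex.I * (ξ j : ℂ)) := by
  simp [ContinuousLinearMap.smul_apply, EuclideanSpace.inner_single_right, smul_eq_mul]

lemma hasFDerivAt_conjShift (φ : SchwartzMap (Euc n) ℂ) (x y : Euc n) :
    HasFDerivAt (fun y : Euc n => (starRingEnd ℂ) (φ (y - x)))
      (((Complex.conjCLE : ℂ ≃L[ℝ] ℂ) : ℂ →L[ℝ] ℂ).comp (fderiv ℝ (⇑φ) (y - x))) y := by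
  have h0 : HasFDerivAt (fun y : Euc n => y - x) (ContinuousLinearMap.id ℝ (Euc n)) y := by
    simpa using (hasFDerivAt_id y).sub_const x
  have h1 : HasFDerivAt (fun y : Euc n => φ (y - x)) (fderiv ℝ (⇑φ) (y - x)) y := by
    have := ((φ.differentiable (y - x)).hasFDerivAt).comp y h0
    exact this
  have h2 := (((Complex.conjCLE : ℂ ≃L[ℝ] ℂ) : ℂ →L[ℝ] ℂ).hasFDerivAt).comp y h1
  simpa [Function.comp_def] using h2

lemma integrable_core (φ f : SchwartzMap (Euc n) ℂ) (x ξ : Euc n) :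
    Integrable (fun y => (starRingEnd ℂ) (φ (y - x)) * f y * efac ξ y) := by
  have h : (fun y : Euc n => (starRingEnd ℂ) (φ (y - x)) * f y * efac ξ y)
      = fun y => ((starRingEnd ℂ) (φ (y - x)) * efac ξ y) * f y := by
    funext y; ring
  rw [h]
  refine (f.integrable (μ := volume)).bdd_mul (c := (SchwartzMap.seminorm ℝ 0 0) φ) ?_ ?_
  · have hc : Continuous fun y : Euc n => (starRingEnd ℂ) (φ (y - x)) :=
      Complex.continuous_conj.comp (φ.continuous.comp (continuous_id.sub continuous_const))
    exact (hc.mul (continuous_efac ξ)).aestronglyMeasurable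
  · refine ae_of_all _ fun y => ?_
    rw [norm_mul, norm_efac, mul_one, RCLike.norm_conj]
    exact φ.norm_le_seminorm ℝ _

lemma wpt_eq (φ f : SchwartzMap (Euc n) ℂ) (x ξ : Euc n) :
    wpt ⇑φ ⇑f x ξ = ∫ y, (starRingEnd ℂ) (φ (y - x)) * f y * efac ξ y := rfl

/-- Integration by parts: moving one derivative off `f`. -/
lemma wpt_pderiv_right (φ f : SchwartzMap (Euc n) ℂ) (x ξ : Euc n) (j : Fin n) :
    wpt ⇑φ ⇑(pderivS j f) x ξ
      = Complex.I * (ξ j : ℂ) * wpt ⇑φ ⇑f x ξ - wpt ⇑(pderivS j φ) ⇑f x ξ := by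
  set v : Euc n := EuclideanSpace.single j (1:ℝ) with hv
  set F : Euc n → ℂ := fun y => (starRingEnd ℂ) (φ (y - x)) * efac ξ y with hF
  set c : Euc n → ℂ := fun y =>
      (starRingEnd ℂ) (φ (y - x)) * (efac ξ y * (-Complex.I * (ξ j : ℂ)))
        + efac ξ y * (starRingEnd ℂ) ((pderivS j φ) (y - x)) with hc
  have ecf : (fun y => c y * f y)
      = fun y => (-Complex.I * (ξ j : ℂ)) * ((starRingEnd ℂ) (φ (y - x)) * f y * efac ξ y)
          + ((starRingEnd ℂ) ((pderivS j φ) (y - x)) * f y * efac ξ y) := by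
    funext y; simp only [hc]; ring
  have hint1 : Integrable (fun y => c y * f y) := by
    rw [ecf]
    exact ((integrable_core φ f x ξ).const_mul _).add (integrable_core (pderivS j φ) f x ξ)
  have eFf' : (fun y => F y * fderiv ℝ (⇑f) y v)
      = fun y => (starRingEnd ℂ) (φ (y - x)) * (pderivS j f) y * efac ξ y := by
    funext y
    have : (pderivS j f) y = fderiv ℝ (⇑f) y v := rfl
    rw [this]; simp only [hF]; ring
  have hint2 : Integrable (fun y => F y * fderiv ℝ (⇑f) y v) := by
    rw [eFf']; exact integrable_core φ (pderivS j f) x ξ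
  have hint3 : Integrable (fun y => F y * f y) := by
    have e1 : (fun y => F y * f y)
        = fun y => (starRingEnd ℂ) (φ (y - x)) * f y * efac ξ y := by
      funext y; simp only [hF]; ring
    rw [e1]; exact integrable_core φ f x ξ
  have hlineF : ∀ y, HasLineDerivAt ℝ F (c y) y v := by
    intro y
    have hmul := (hasFDerivAt_conjShift φ x y).mul (hasFDerivAt_efac ξ y)
    have hld := hmul.hasLineDerivAt v
    have heq : ((starRingEnd ℂ) (φ (y - x))
          • (efac ξ y • ((-Complex.I) • (Complex.ofRealCLM.comp (innerSL ℝ ξ))))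
        + efac ξ y
          • (((Complex.conjCLE : ℂ ≃L[ℝ] ℂ) : ℂ →L[ℝ] ℂ).comp (fderiv ℝ (⇑φ) (y - x)))) v
        = c y := by
      have hpd : (pderivS j φ) (y - x) = fderiv ℝ (⇑φ) (y - x) v :=
        rfl
      simp only [ContinuousLinearMap.add_apply, ContinuousLinearMap.smul_apply, smul_eq_mul,
        ContinuousLinearMap.comp_apply, ContinuousLinearEquiv.coe_coe, Complex.conjCLE_apply,
        Complex.ofRealCLM_apply, innerSL_apply_apply, hc, hpd, hv,
        EuclideanSpace.inner_single_right, RCLike.conj_to_real]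
      push_cast
      ring
    exact heq ▸ hld
  have hlineg : ∀ y, HasLineDerivAt ℝ (⇑f) (fderiv ℝ (⇑f) y v) y v := fun y =>
    ((f.differentiable y).hasFDerivAt).hasLineDerivAt v
  have key := integral_bilinear_hasLineDerivAt_right_eq_neg_left_of_integrable
      (μ := volume) (B := ContinuousLinearMap.mul ℝ ℂ)
      (by simpa using hint1) (by simpa using hint2) (by simpa using hint3) (fun y _ => hlineF y) (fun y _ => hlineg y)
  simp only [ContinuousLinearMap.mul_apply'] at key
  have lhs_eq : wpt ⇑φ ⇑(pderivS j f) x ξ = ∫ y, F y * fderiv ℝ (⇑f) y v := by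
    rw [wpt_eq, eFf']
  rw [lhs_eq, key, ecf]
  rw [integral_add ((integrable_core φ f x ξ).const_mul _) (integrable_core (pderivS j φ) f x ξ),
    integral_const_mul, ← wpt_eq, ← wpt_eq]
  ring


/-- The integrand of the `x`-derivative of the wave packet transform. -/
def Fd (φ f : SchwartzMap (Euc n) ℂ) (ξ x y : Euc n) : Euc n →L[ℝ] ℂ :=
  -((f y * efac ξ y) •
    (((Complex.conjCLE : ℂ ≃L[ℝ] ℂ) : ℂ →L[ℝ] ℂ).comp (fderiv ℝ (⇑φ) (y - x))))

lemma fderiv_bound (φ : SchwartzMap (Euc n) ℂ) : ∃ C, ∀ z, ‖fderiv ℝ (⇑φ) z‖ ≤ C := by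
  refine ⟨(SchwartzMap.seminorm ℝ 0 0) (SchwartzMap.fderivCLM ℝ (Euc n) ℂ φ), fun z => ?_⟩
  have := (SchwartzMap.fderivCLM ℝ (Euc n) ℂ φ).norm_le_seminorm ℝ z
  simpa [SchwartzMap.fderivCLM_apply] using this

lemma continuous_Fd (φ f : SchwartzMap (Euc n) ℂ) (ξ x : Euc n) :
    Continuous (Fd φ f ξ x) := by
  refine Continuous.neg (Continuous.fun_smul ?_ ?_)
  · exact f.continuous.mul (continuous_efac ξ)
  · have h1 : Continuous fun y : Euc n => fderiv ℝ (⇑φ) (y - x) :=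
      ((φ.smooth 1).continuous_fderiv one_ne_zero).comp (continuous_id.sub continuous_const)
    exact ((ContinuousLinearMap.compL ℝ (Euc n) ℂ ℂ
      ((Complex.conjCLE : ℂ ≃L[ℝ] ℂ) : ℂ →L[ℝ] ℂ)).continuous).comp h1

lemma norm_Fd_le (φ f : SchwartzMap (Euc n) ℂ) (ξ : Euc n) {M : ℝ}
    (hM : ∀ z, ‖fderiv ℝ (⇑φ) z‖ ≤ M) (x y : Euc n) :
    ‖Fd φ f ξ x y‖ ≤ ‖f y‖ * (‖((Complex.conjCLE : ℂ ≃L[ℝ] ℂ) : ℂ →L[ℝ] ℂ)‖ * M) := by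
  rw [Fd, norm_neg]
  refine le_trans (ContinuousLinearMap.opNorm_smul_le _ _) ?_
  rw [norm_mul, norm_efac, mul_one]
  refine mul_le_mul_of_nonneg_left ?_ (norm_nonneg _)
  refine (ContinuousLinearMap.opNorm_comp_le _ _).trans ?_
  exact mul_le_mul_of_nonneg_left (hM _) (norm_nonneg _)

lemma hasFDerivAt_F_x (φ f : SchwartzMap (Euc n) ℂ) (ξ : Euc n) (y x' : Euc n) :
    HasFDerivAt (fun x'' : Euc n => (starRingEnd ℂ) (φ (y - x'')) * f y * efac ξ y)
      (Fd φ f ξ x' y) x' := by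
  have h0 : HasFDerivAt (fun x'' : Euc n => y - x'')
      (-(ContinuousLinearMap.id ℝ (Euc n))) x' := by
    have h := (hasFDerivAt_id (𝕜 := ℝ) x').const_sub y
    simpa using h
  have h1 : HasFDerivAt (fun x'' : Euc n => φ (y - x''))
      ((fderiv ℝ (⇑φ) (y - x')).comp (-(ContinuousLinearMap.id ℝ (Euc n)))) x' :=
    ((φ.differentiable (y - x')).hasFDerivAt).comp x' h0
  have h2 := ((((Complex.conjCLE : ℂ ≃L[ℝ] ℂ) : ℂ →L[ℝ] ℂ)).hasFDerivAt).comp x' h1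
  have h3 := h2.mul_const (f y * efac ξ y)
  have heq : ((f y * efac ξ y) •
      (((Complex.conjCLE : ℂ ≃L[ℝ] ℂ) : ℂ →L[ℝ] ℂ).comp
        ((fderiv ℝ (⇑φ) (y - x')).comp (-(ContinuousLinearMap.id ℝ (Euc n))))))
      = Fd φ f ξ x' y := by
    ext w
    simp [Fd, Function.comp_def, mul_comm]
  have heq2 : (fun x'' : Euc n => (starRingEnd ℂ) (φ (y - x'')) * f y * efac ξ y)
      = fun x'' : Euc n =>
        (((Complex.conjCLE : ℂ ≃L[ℝ] ℂ) : ℂ →L[ℝ] ℂ) ∘ fun x'' : Euc n => φ (y - x'')) x''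
          * (f y * efac ξ y) := by
    funext z; simp [Function.comp_def, mul_assoc]
  rw [heq, ← heq2] at h3
  exact h3

lemma hasFDerivAt_wpt_x (φ f : SchwartzMap (Euc n) ℂ) (x ξ : Euc n) :
    HasFDerivAt (fun x' => wpt (⇑φ) (⇑f) x' ξ) (∫ y, Fd φ f ξ x y) x := by
  obtain ⟨M, hM⟩ := fderiv_bound φ
  set C : ℝ := ‖((Complex.conjCLE : ℂ ≃L[ℝ] ℂ) : ℂ →L[ℝ] ℂ)‖ * M with hC
  have hwpt : (fun x' => wpt (⇑φ) (⇑f) x' ξ)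
      = fun x' => ∫ y, (starRingEnd ℂ) (φ (y - x')) * f y * efac ξ y := rfl
  rw [hwpt]
  refine hasFDerivAt_integral_of_dominated_of_fderiv_le (𝕜 := ℝ)
    (F' := fun x' y => Fd φ f ξ x' y)
    (bound := fun y => ‖f y‖ * C) (Metric.ball_mem_nhds x zero_lt_one) ?_ ?_ ?_ ?_ ?_ ?_
  · exact Eventually.of_forall fun x' => (integrable_core φ f x' ξ).aestronglyMeasurable
  · exact integrable_core φ f x ξ
  · exact (continuous_Fd φ f ξ x).aestronglyMeasurable
  · exact ae_of_all _ fun y x' _ => norm_Fd_le φ f ξ hM x' y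
  · exact (f.integrable (μ := volume)).norm.mul_const C
  · exact ae_of_all _ fun y x' _ => hasFDerivAt_F_x φ f ξ y x'

lemma integrable_Fd (φ f : SchwartzMap (Euc n) ℂ) (ξ x : Euc n) :
    Integrable (fun y => Fd φ f ξ x y) := by
  obtain ⟨M, hM⟩ := fderiv_bound φ
  refine Integrable.mono' ((f.integrable (μ := volume)).norm.mul_const
    (‖((Complex.conjCLE : ℂ ≃L[ℝ] ℂ) : ℂ →L[ℝ] ℂ)‖ * M))
    (continuous_Fd φ f ξ x).aestronglyMeasurable ?_
  exact ae_of_all _ fun y => norm_Fd_le φ f ξ hM x y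

/-- The `x`-derivative of the wave packet transform in direction `e_j`. -/
lemma wpt_fderiv_x (φ f : SchwartzMap (Euc n) ℂ) (x ξ : Euc n) (j : Fin n) :
    fderiv ℝ (fun x' => wpt (⇑φ) (⇑f) x' ξ) x (EuclideanSpace.single j (1 : ℝ))
      = - wpt (⇑(pderivS j φ)) (⇑f) x ξ := by
  rw [(hasFDerivAt_wpt_x φ f x ξ).fderiv]
  rw [ContinuousLinearMap.integral_apply (integrable_Fd φ f ξ x)]
  rw [wpt_eq, ← integral_neg]
  congr 1
  funext y
  have hpd : (pderivS j φ) (y - x) = fderiv ℝ (⇑φ) (y - x) (EuclideanSpace.single j (1:ℝ)) :=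
    rfl
  simp only [Fd, ContinuousLinearMap.neg_apply, ContinuousLinearMap.smul_apply,
    ContinuousLinearMap.comp_apply, ContinuousLinearEquiv.coe_coe, Complex.conjCLE_apply,
    smul_eq_mul, hpd]
  ring

lemma wpt_sum_right (φ : SchwartzMap (Euc n) ℂ) (g : Fin n → SchwartzMap (Euc n) ℂ)
    (x ξ : Euc n) :
    wpt ⇑φ ⇑(∑ j : Fin n, g j) x ξ = ∑ j : Fin n, wpt ⇑φ ⇑(g j) x ξ := by
  have hcoe : ⇑(∑ j : Fin n, g j) = ∑ j : Fin n, ⇑(g j) :=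
    map_sum (FunLike.coeAddMonoidHom (SchwartzMap (Euc n) ℂ) (Euc n) ℂ) g Finset.univ
  have h1 : wpt ⇑φ ⇑(∑ j : Fin n, g j) x ξ
      = ∫ y, ∑ j : Fin n, (starRingEnd ℂ) (φ (y - x)) * (g j) y * efac ξ y := by
    rw [wpt_eq]
    congr 1
    funext y
    rw [hcoe, Finset.sum_apply, Finset.mul_sum, Finset.sum_mul]
  rw [h1, integral_finset_sum _ fun j _ => integrable_core φ (g j) x ξ]
  rfl

lemma wpt_sum_left (g : Fin n → SchwartzMap (Euc n) ℂ) (f : SchwartzMap (Euc n) ℂ)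
    (x ξ : Euc n) :
    wpt ⇑(∑ j : Fin n, g j) ⇑f x ξ = ∑ j : Fin n, wpt ⇑(g j) ⇑f x ξ := by
  have hcoe : ⇑(∑ j : Fin n, g j) = ∑ j : Fin n, ⇑(g j) :=
    map_sum (FunLike.coeAddMonoidHom (SchwartzMap (Euc n) ℂ) (Euc n) ℂ) g Finset.univ
  have h1 : wpt ⇑(∑ j : Fin n, g j) ⇑f x ξ
      = ∫ y, ∑ j : Fin n, (starRingEnd ℂ) ((g j) (y - x)) * f y * efac ξ y := by
    rw [wpt_eq]
    congr 1
    funext y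
    rw [hcoe, Finset.sum_apply, map_sum, Finset.sum_mul, Finset.sum_mul]
  rw [h1, integral_finset_sum _ fun j _ => integrable_core (g j) f x ξ]
  rfl

end WptAux

/-- for Schwartz `φ ≠ 0` and Schwartz `f`,
`W_φ[Δf](x,ξ) = W_{Δφ} f(x,ξ) + 2 i ξ·∇_x (W_φ f)(x,ξ) − |ξ|² W_φ f(x,ξ)`. -/
theorem stmt2 {n : ℕ} (hn : 1 ≤ n) (φ f : SchwartzMap (Euc n) ℂ) (hφ : φ ≠ 0)
    (x ξ : Euc n) :
    wpt ⇑φ ⇑(lapS f) x ξ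
      = wpt ⇑(lapS φ) ⇑f x ξ
        + 2 * Complex.I * ∑ j : Fin n, (ξ j : ℂ) *
            fderiv ℝ (fun x' => wpt ⇑φ ⇑f x' ξ) x (EuclideanSpace.single j (1 : ℝ))
        - Complex.ofReal (‖ξ‖ ^ 2) * wpt ⇑φ ⇑f x ξ := by
  classical
  have hA : ∀ j : Fin n, wpt ⇑φ ⇑(pderivS j (pderivS j f)) x ξ
      = wpt ⇑(pderivS j (pderivS j φ)) ⇑f x ξ
        - 2 * Complex.I * (ξ j : ℂ) * wpt ⇑(pderivS j φ) ⇑f x ξ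
        - ((ξ j : ℂ) * (ξ j : ℂ)) * wpt ⇑φ ⇑f x ξ := by
    intro j
    rw [WptAux.wpt_pderiv_right φ (pderivS j f) x ξ j,
      WptAux.wpt_pderiv_right φ f x ξ j,
      WptAux.wpt_pderiv_right (pderivS j φ) f x ξ j]
    have hI := Complex.I_sq
    ring_nf
    rw [Complex.I_sq]
    ring
  have hL : wpt ⇑φ ⇑(lapS f) x ξ = ∑ j : Fin n, wpt ⇑φ ⇑(pderivS j (pderivS j f)) x ξ :=
    WptAux.wpt_sum_right φ (fun j => pderivS j (pderivS j f)) x ξ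
  have hR : wpt ⇑(lapS φ) ⇑f x ξ = ∑ j : Fin n, wpt ⇑(pderivS j (pderivS j φ)) ⇑f x ξ :=
    WptAux.wpt_sum_left (fun j => pderivS j (pderivS j φ)) f x ξ
  have hD : ∀ j : Fin n, fderiv ℝ (fun x' => wpt ⇑φ ⇑f x' ξ) x (EuclideanSpace.single j (1:ℝ))
      = - wpt ⇑(pderivS j φ) ⇑f x ξ := fun j => WptAux.wpt_fderiv_x φ f x ξ j
  have hnorm : (Complex.ofReal (‖ξ‖ ^ 2)) = ∑ j : Fin n, (ξ j : ℂ) * (ξ j : ℂ) := by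
    rw [← real_inner_self_eq_norm_sq ξ]
    rw [show (inner ℝ ξ ξ : ℝ) = ∑ j : Fin n, ξ j * ξ j from PiLp.inner_apply ξ ξ]
    push_cast
    rfl
  rw [hL, hR, hnorm]
  simp only [hA, hD]
  rw [Finset.mul_sum, Finset.sum_mul, ← Finset.sum_add_distrib, ← Finset.sum_sub_distrib]
  refine Finset.sum_congr rfl fun j _ => by ring
end
end

section
/- Let n ≥ 1, let φ₀ ∈ 𝒮(ℝⁿ) be a nonzero Schwartz function, let ψ ∈ 𝒮(ℝⁿ), and let t ∈ ℝ. Then for all (x,ξ) ∈ ℝⁿ × ℝⁿ one has W_{e^{−itH₀}φ₀}[ e^{−itH₀}ψ ](x,ξ) = e^{−i t |ξ|²/2} W_{φ₀}ψ(x − tξ, ξ). -/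
open MeasureTheory Complex Filter
open scoped RealInnerProductSpace ENNReal

noncomputable section

/-- Fourier transform `ℱf(ξ) = ∫ e^{−i x·ξ} f(x) dx`. -/
def FT {n : ℕ} (f : Euc n → ℂ) (ξ : Euc n) : ℂ :=
  ∫ x, Complex.exp (-(Complex.I) * Complex.ofReal ⟪x, ξ⟫) * f x

/-- Free Schrödinger evolution `e^{−itH₀}f = ℱ⁻¹(e^{−it|ξ|²/2} ℱf)`, `H₀ = −½Δ`. -/
def freeEv {n : ℕ} (t : ℝ) (f : Euc n → ℂ) (x : Euc n) : ℂ :=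
  (Complex.ofReal ((2 * Real.pi) ^ n))⁻¹ *
    ∫ ξ, Complex.exp (Complex.I * Complex.ofReal ⟪x, ξ⟫) *
      (Complex.exp (-(Complex.I) * (t : ℂ) * Complex.ofReal (‖ξ‖ ^ 2) / 2) * FT f ξ)

open Real
open scoped FourierTransform

section Aux

noncomputable section

variable {F : Type*} [NormedAddCommGroup F] [InnerProductSpace ℝ F]

noncomputable def innerCLM' : F →L[ℝ] F →L[ℝ] ℝ :=
  LinearMap.mkContinuous₂ (innerₗ F) 1 (fun x y => by
    simpa using abs_real_inner_le_norm x y)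

@[simp] lemma innerCLM'_apply (x y : F) : innerCLM' x y = ⟪x, y⟫ := rfl

noncomputable def mclm (c : ℂ) : F →L[ℝ] F →L[ℝ] ℂ :=
  c • ((ContinuousLinearMap.compL ℝ F ℝ ℂ Complex.ofRealCLM).comp innerCLM')

@[simp] lemma mclm_apply (c : ℂ) (x y : F) : mclm c x y = c * (⟪x, y⟫ : ℝ) := by
  simp [mclm]

lemma hasFDerivAt_expQuad (c : ℂ) (x : F) :
    HasFDerivAt (fun z : F => Complex.exp (c * ((‖z‖ ^ 2 : ℝ) : ℂ)))
      (Complex.exp (c * ((‖x‖ ^ 2 : ℝ) : ℂ)) • (mclm (2 * c) x)) x := by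
  have h1 : HasFDerivAt (fun z : F => ((‖z‖ ^ 2 : ℝ) : ℂ))
      (Complex.ofRealCLM.comp (2 • innerSL ℝ x)) x :=
    Complex.ofRealCLM.hasFDerivAt.comp x (hasStrictFDerivAt_norm_sq x).hasFDerivAt
  have h2 := (h1.const_mul c).cexp
  convert h2 using 1
  ext y
  simp [mul_comm, mul_assoc, mul_left_comm]

lemma contDiff_expQuad (c : ℂ) :
    ContDiff ℝ (⊤ : ℕ∞) (fun z : F => Complex.exp (c * ((‖z‖ ^ 2 : ℝ) : ℂ))) := by
  exact (contDiff_const.mul (Complex.ofRealCLM.contDiff.comp (contDiff_norm_sq ℝ))).cexp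

lemma norm_expQuad (c : ℂ) (hc : c.re = 0) (z : F) :
    ‖Complex.exp (c * ((‖z‖ ^ 2 : ℝ) : ℂ))‖ = 1 := by
  rw [Complex.norm_exp]
  have : (c * ((‖z‖ ^ 2 : ℝ) : ℂ)).re = 0 := by
    rw [Complex.mul_re, hc, Complex.ofReal_re, Complex.ofReal_im]
    ring
  rw [this, Real.exp_zero]

lemma hasTemperateGrowth_expQuad (c : ℂ) (hc : c.re = 0) :
    Function.HasTemperateGrowth (fun z : F => Complex.exp (c * ((‖z‖ ^ 2 : ℝ) : ℂ))) := by
  set f : F → ℂ := fun z => Complex.exp (c * ((‖z‖ ^ 2 : ℝ) : ℂ)) with hf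
  have hsm : ContDiff ℝ (⊤ : ℕ∞) f := contDiff_expQuad c
  have hderiv : fderiv ℝ f = fun z => f z • (mclm (2 * c) z) := by
    funext z
    exact (hasFDerivAt_expQuad c z).fderiv
  have key : ∀ k : ℕ, ∃ (l : ℕ) (C : ℝ), 0 ≤ C ∧
      ∀ i ≤ k, ∀ z : F, ‖iteratedFDeriv ℝ i f z‖ ≤ C * (1 + ‖z‖) ^ l := by
    intro k
    induction k with
    | zero =>
      refine ⟨0, 1, zero_le_one, ?_⟩
      intro i hi z
      interval_cases i
      rw [norm_iteratedFDeriv_zero]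
      simpa [f] using (norm_expQuad c hc z).le
    | succ k ih =>
      obtain ⟨l, C, hC0, hC⟩ := ih
      obtain ⟨l', C', hC'0, hM⟩ :=
        ((mclm (2 * c) : F →L[ℝ] F →L[ℝ] ℂ).hasTemperateGrowth).norm_iteratedFDeriv_le_uniform k
      refine ⟨l + l', max C ((2:ℝ) ^ k * ((k+1) * (C * C'))), le_max_of_le_left hC0, ?_⟩
      intro i hi z
      have h1z : (1:ℝ) ≤ 1 + ‖z‖ := by linarith [norm_nonneg z]
      by_cases hik : i ≤ k
      · calc ‖iteratedFDeriv ℝ i f z‖ ≤ C * (1 + ‖z‖) ^ l := hC i hik z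
          _ ≤ max C ((2:ℝ) ^ k * ((k+1) * (C * C'))) * (1 + ‖z‖) ^ (l + l') := by
            apply mul_le_mul (le_max_left _ _) (pow_le_pow_right₀ h1z (Nat.le_add_right _ _)) (by positivity) (by positivity)
      · -- i = k + 1
        have hik1 : i = k + 1 := le_antisymm hi (Nat.succ_le_of_lt (Nat.lt_of_not_le hik))
        subst hik1
        have heq : ‖iteratedFDeriv ℝ (k + 1) f z‖ = ‖iteratedFDeriv ℝ k (fderiv ℝ f) z‖ :=
          (norm_iteratedFDeriv_fderiv (𝕜 := ℝ)).symm
        rw [heq, hderiv]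
        have hbound := norm_iteratedFDeriv_smul_le (𝕜 := ℝ) (f := f)
          (g := fun z => (mclm (2 * c) : F →L[ℝ] F →L[ℝ] ℂ) z)
          hsm (((mclm (2 * c)).hasTemperateGrowth).1) z
          (n := k) (mod_cast le_top)
        refine hbound.trans ?_
        have hterm : ∀ j ∈ Finset.range (k + 1),
            (k.choose j : ℝ) * ‖iteratedFDeriv ℝ j f z‖ *
              ‖iteratedFDeriv ℝ (k - j) (fun z => (mclm (2 * c) : F →L[ℝ] F →L[ℝ] ℂ) z) z‖
            ≤ (k.choose j : ℝ) * ((C * C') * (1 + ‖z‖) ^ (l + l')) := by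
          intro j hj
          rw [Finset.mem_range, Nat.lt_succ_iff] at hj
          have h1 : ‖iteratedFDeriv ℝ j f z‖ ≤ C * (1 + ‖z‖) ^ l := hC j hj z
          have h2 : ‖iteratedFDeriv ℝ (k - j) (fun z => (mclm (2 * c) : F →L[ℝ] F →L[ℝ] ℂ) z) z‖
              ≤ C' * (1 + ‖z‖) ^ l' := hM (k - j) (Nat.sub_le _ _) z
          calc (k.choose j : ℝ) * ‖iteratedFDeriv ℝ j f z‖ *
              ‖iteratedFDeriv ℝ (k - j) (fun z => (mclm (2 * c) : F →L[ℝ] F →L[ℝ] ℂ) z) z‖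
              ≤ (k.choose j : ℝ) * (C * (1 + ‖z‖) ^ l) * (C' * (1 + ‖z‖) ^ l') := by
                apply mul_le_mul _ h2 (norm_nonneg _) (by positivity)
                exact mul_le_mul_of_nonneg_left h1 (by positivity)
            _ = (k.choose j : ℝ) * ((C * C') * (1 + ‖z‖) ^ (l + l')) := by rw [pow_add]; ring
        refine (Finset.sum_le_sum hterm).trans ?_
        rw [← Finset.sum_mul]
        have hcs : (∑ j ∈ Finset.range (k + 1), (k.choose j : ℝ)) = 2 ^ k := by
          rw [← Nat.cast_sum]
          rw [Nat.sum_range_choose]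
          push_cast; ring
        rw [hcs]
        have hP : (0:ℝ) ≤ (1 + ‖z‖) ^ (l + l') := by positivity
        have h2 : C * C' ≤ (k + 1 : ℝ) * (C * C') :=
          le_mul_of_one_le_left (mul_nonneg hC0 hC'0) (by push_cast; linarith [Nat.cast_nonneg (α := ℝ) k])
        calc (2:ℝ) ^ k * ((C * C') * (1 + ‖z‖) ^ (l + l'))
            = ((2:ℝ) ^ k * (C * C')) * (1 + ‖z‖) ^ (l + l') := by ring
          _ ≤ ((2:ℝ) ^ k * ((k+1) * (C * C'))) * (1 + ‖z‖) ^ (l + l') := by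
              apply mul_le_mul_of_nonneg_right _ hP
              exact mul_le_mul_of_nonneg_left h2 (by positivity)
          _ ≤ max C ((2:ℝ) ^ k * ((k+1) * (C * C'))) * (1 + ‖z‖) ^ (l + l') := by
              apply mul_le_mul_of_nonneg_right (le_max_right _ _) (by positivity)
  refine ⟨hsm, fun n => ?_⟩
  obtain ⟨l, C, hC0, h⟩ := key n
  exact ⟨l, C, fun z => h n le_rfl z⟩


end

noncomputable section



variable {n : ℕ}

lemma two_pi_ne : (2 * π) ≠ 0 := by positivity

lemma FT_eq (f : Euc n → ℂ) (ξ : Euc n) :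
    FT f ξ = 𝓕 f ((2 * π)⁻¹ • ξ) := by
  rw [Real.fourier_eq']
  unfold FT
  congr 1
  ext x
  rw [smul_eq_mul, real_inner_smul_right]
  have h : -2 * π * ((2 * π)⁻¹ * ⟪x, ξ⟫) = -⟪x, ξ⟫ := by
    field_simp
  rw [h]
  push_cast
  ring_nf

lemma FT_smul (f : Euc n → ℂ) (w : Euc n) : FT f ((2 * π) • w) = 𝓕 f w := by
  rw [FT_eq, smul_smul, inv_mul_cancel₀ two_pi_ne, one_smul]

lemma integral_scale (H : Euc n → ℂ) :
    ∫ ξ, H ξ = (((2 * π) ^ n : ℝ) : ℂ) * ∫ w, H ((2 * π) • w) := by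
  rw [MeasureTheory.Measure.integral_comp_smul volume H (2 * π)]
  rw [finrank_euclideanSpace_fin]
  have hpos : (0:ℝ) < (2 * π) ^ n := by positivity
  rw [abs_of_pos (by positivity), Complex.real_smul, ← mul_assoc, ← Complex.ofReal_mul,
    mul_inv_cancel₀ hpos.ne', Complex.ofReal_one, one_mul]

end

noncomputable section

def mfun (t : ℝ) {n : ℕ} (ξ : Euc n) : ℂ :=
  Complex.exp (-(Complex.I) * (t : ℂ) * Complex.ofReal (‖ξ‖ ^ 2) / 2)


lemma hCne : (((2 * π) ^ n : ℝ) : ℂ) ≠ 0 := by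
  rw [Complex.ofReal_ne_zero]
  positivity

lemma invFT_repr (g : Euc n → ℂ) (z : Euc n) :
    𝓕⁻ g z = (((2 * π) ^ n : ℝ) : ℂ)⁻¹ *
      ∫ η, Complex.exp (Complex.I * Complex.ofReal ⟪z, η⟫) * g ((2 * π)⁻¹ • η) := by
  rw [integral_scale fun η => Complex.exp (Complex.I * Complex.ofReal ⟪z, η⟫) * g ((2 * π)⁻¹ • η),
    ← mul_assoc, inv_mul_cancel₀ hCne, one_mul, Real.fourierInv_eq']
  congr 1
  ext w
  rw [smul_smul, inv_mul_cancel₀ two_pi_ne, one_smul, smul_eq_mul, real_inner_smul_right]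
  congr 1
  rw [real_inner_comm z w]
  push_cast
  ring

lemma freeEv_repr (t : ℝ) (f : Euc n → ℂ) (x : Euc n) :
    freeEv t f x = 𝓕⁻ (fun w => mfun t ((2 * π) • w) * 𝓕 f w) x := by
  rw [invFT_repr]
  unfold freeEv
  congr 1
  congr 1
  ext ξ
  rw [smul_smul, mul_inv_cancel₀ two_pi_ne, one_smul, ← FT_eq]
  rfl

end

noncomputable section
variable {n : ℕ}

lemma re_negI_mul (r : ℝ) : (-(Complex.I) * (r : ℂ)).re = 0 := by simp

lemma mfun_eq_mexp (t : ℝ) (ξ : Euc n) :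
    mfun t ξ = Complex.exp ((-(Complex.I) * ((t/2 : ℝ) : ℂ)) * ((‖ξ‖ ^ 2 : ℝ) : ℂ)) := by
  unfold mfun
  congr 1
  push_cast
  ring

lemma mfun_smul (t : ℝ) (w : Euc n) :
    mfun t ((2 * π) • w)
      = Complex.exp ((-(Complex.I) * ((t/2 * (2*π)^2 : ℝ) : ℂ)) * ((‖w‖ ^ 2 : ℝ) : ℂ)) := by
  unfold mfun
  congr 1
  have hn : ‖(2 * π) • w‖ ^ 2 = (2*π)^2 * ‖w‖^2 := by
    rw [norm_smul]
    simp [abs_of_pos (by positivity : (0:ℝ) < 2*π), mul_pow]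
  rw [hn]
  push_cast
  ring

/-- The free evolution as a Schwartz map. -/
def evS (t : ℝ) (f : SchwartzMap (Euc n) ℂ) : SchwartzMap (Euc n) ℂ :=
  (SchwartzMap.fourierTransformCLE ℂ (SchwartzMap (Euc n) ℂ)).symm
    (SchwartzMap.bilinLeftCLM (ContinuousLinearMap.mul ℝ ℂ)
      (hasTemperateGrowth_expQuad (-(Complex.I) * ((t/2 * (2*π)^2 : ℝ) : ℂ)) (re_negI_mul _))
      (SchwartzMap.fourierTransformCLM ℂ f))

lemma evS_coe_aux (t : ℝ) (f : SchwartzMap (Euc n) ℂ) :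
    ⇑(evS t f) = 𝓕⁻ (fun w => mfun t ((2 * π) • w) * 𝓕 ⇑f w) := by
  unfold evS
  rw [show ∀ g : SchwartzMap (Euc n) ℂ, ⇑((SchwartzMap.fourierTransformCLE ℂ (SchwartzMap (Euc n) ℂ)).symm g) = 𝓕⁻ ⇑g from fun g => SchwartzMap.fourierInv_coe g]
  have harg : (⇑(SchwartzMap.bilinLeftCLM (ContinuousLinearMap.mul ℝ ℂ)
      (hasTemperateGrowth_expQuad (-(Complex.I) * ((t/2 * (2*π)^2 : ℝ) : ℂ)) (re_negI_mul _))
      (SchwartzMap.fourierTransformCLM ℂ f)) : Euc n → ℂ)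
      = fun w => mfun t ((2 * π) • w) * 𝓕 ⇑f w := by
    funext w
    show (SchwartzMap.fourierTransformCLM ℂ f) w * _ = _
    rw [mfun_smul, mul_comm]
    beta_reduce
    rw [SchwartzMap.fourierTransformCLM_apply, SchwartzMap.fourier_coe]
  rw [harg]

lemma evS_coe (t : ℝ) (f : SchwartzMap (Euc n) ℂ) :
    ⇑(evS t f) = freeEv t ⇑f := by
  funext x
  rw [freeEv_repr, evS_coe_aux]

lemma FT_evS (t : ℝ) (f : SchwartzMap (Euc n) ℂ) (ξ : Euc n) :
    FT ⇑(evS t f) ξ = mfun t ξ * FT ⇑f ξ := by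
  set g := SchwartzMap.bilinLeftCLM (ContinuousLinearMap.mul ℝ ℂ)
      (hasTemperateGrowth_expQuad (-(Complex.I) * ((t/2 * (2*π)^2 : ℝ) : ℂ)) (re_negI_mul _))
      (SchwartzMap.fourierTransformCLM ℂ f) with hg
  have hcoe : ⇑(evS t f) = 𝓕⁻ ⇑g := by
    unfold evS
    rw [← hg, show ∀ g : SchwartzMap (Euc n) ℂ, ⇑((SchwartzMap.fourierTransformCLE ℂ (SchwartzMap (Euc n) ℂ)).symm g) = 𝓕⁻ ⇑g from fun g => SchwartzMap.fourierInv_coe g]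
  have hint : Integrable (𝓕 ⇑g) := by
    have := (SchwartzMap.fourierTransformCLM ℂ g).integrable (μ := volume)
    rwa [SchwartzMap.fourierTransformCLM_apply] at this
  have hinv : 𝓕 (𝓕⁻ ⇑g) = ⇑g := Continuous.fourier_fourierInv_eq g.continuous (g.integrable) hint
  rw [FT_eq, hcoe, hinv]
  show (SchwartzMap.fourierTransformCLM ℂ f) _ * _ = _
  rw [SchwartzMap.fourierTransformCLM_apply, SchwartzMap.fourier_coe]
  beta_reduce
  rw [← mfun_smul, smul_smul, mul_inv_cancel₀ two_pi_ne, one_smul, mul_comm, FT_eq]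

end

noncomputable section
variable {n : ℕ}


lemma schwartz_FT_integrable (Φ : SchwartzMap (Euc n) ℂ) :
    Integrable (fun η => FT ⇑Φ η) := by
  have h1 : Integrable (𝓕 ⇑Φ) := by
    have := (SchwartzMap.fourierTransformCLM ℂ Φ).integrable (μ := volume)
    rwa [SchwartzMap.fourierTransformCLM_apply] at this
  have h2 : (fun η : Euc n => FT ⇑Φ η) = fun η => (𝓕 ⇑Φ) ((2 * π)⁻¹ • η) :=
    funext (FT_eq ⇑Φ)
  rw [h2]
  exact (MeasureTheory.integrable_comp_smul_iff volume (𝓕 ⇑Φ) (inv_ne_zero two_pi_ne)).2 h1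

lemma schwartz_FT_conj_integrable (Φ : SchwartzMap (Euc n) ℂ) :
    Integrable (fun η => (starRingEnd ℂ) (FT ⇑Φ η)) := by
  have := (Complex.conjCLE.toContinuousLinearMap : ℂ →L[ℝ] ℂ).integrable_comp
    (schwartz_FT_integrable Φ)
  simpa using this

lemma conj_repr (Φ : SchwartzMap (Euc n) ℂ) (z : Euc n) :
    (starRingEnd ℂ) (Φ z) = (((2 * π) ^ n : ℝ) : ℂ)⁻¹ *
      ∫ η, Complex.exp (-(Complex.I) * Complex.ofReal ⟪z, η⟫) * (starRingEnd ℂ) (FT ⇑Φ η) := by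
  have hFint : Integrable (𝓕 ⇑Φ) := by
    have := (SchwartzMap.fourierTransformCLM ℂ Φ).integrable (μ := volume)
    rwa [SchwartzMap.fourierTransformCLM_apply] at this
  have hinv : 𝓕⁻ (𝓕 ⇑Φ) = ⇑Φ :=
    Continuous.fourierInv_fourier_eq Φ.continuous Φ.integrable hFint
  have hrepr : Φ z = (((2 * π) ^ n : ℝ) : ℂ)⁻¹ *
      ∫ η, Complex.exp (Complex.I * Complex.ofReal ⟪z, η⟫) * FT ⇑Φ η := by
    conv_lhs => rw [← hinv]
    rw [invFT_repr]
    congr 1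
    congr 1
    ext η
    rw [← FT_eq]
  rw [hrepr, map_mul, map_inv₀, Complex.conj_ofReal, ← integral_conj]
  congr 1
  congr 1
  ext η
  rw [map_mul, ← Complex.exp_conj]
  congr 2
  simp

lemma wpt_repr (Φ Ψ : SchwartzMap (Euc n) ℂ) (x ξ : Euc n) :
    wpt ⇑Φ ⇑Ψ x ξ = (((2 * π) ^ n : ℝ) : ℂ)⁻¹ *
      ∫ η, (starRingEnd ℂ) (FT ⇑Φ η) * Complex.exp (Complex.I * Complex.ofReal ⟪x, η⟫)
        * FT ⇑Ψ (η + ξ) := by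
  classical
  set A : Euc n → ℂ := fun η => (starRingEnd ℂ) (FT ⇑Φ η) with hA
  set G : Euc n → Euc n → ℂ := fun y η =>
    Complex.exp (-(Complex.I) * Complex.ofReal ⟪y - x, η⟫) * A η *
      (Ψ y * Complex.exp (-(Complex.I) * Complex.ofReal ⟪y, ξ⟫)) with hG
  have step1 : wpt ⇑Φ ⇑Ψ x ξ = ∫ y, (((2 * π) ^ n : ℝ) : ℂ)⁻¹ * ∫ η, G y η := by
    unfold wpt
    congr 1
    ext y
    rw [conj_repr Φ (y - x)]
    rw [mul_assoc, mul_assoc]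
    congr 1
    rw [← MeasureTheory.integral_mul_const]
  rw [step1, MeasureTheory.integral_const_mul]
  have hintG : Integrable (Function.uncurry G) (volume.prod volume) := by
    have base : Integrable (fun p : Euc n × Euc n => Ψ p.1 * A p.2) (volume.prod volume) :=
      (Ψ.integrable (μ := volume)).mul_prod (schwartz_FT_conj_integrable Φ)
    have hphase_cont : Continuous (fun p : Euc n × Euc n =>
        Complex.exp (-(Complex.I) * Complex.ofReal ⟪p.1 - x, p.2⟫) *
          Complex.exp (-(Complex.I) * Complex.ofReal ⟪p.1, ξ⟫)) := by
      apply Continuous.mul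
      · exact Complex.continuous_exp.comp (continuous_const.mul
          (Complex.continuous_ofReal.comp ((continuous_fst.sub continuous_const).inner continuous_snd)))
      · exact Complex.continuous_exp.comp (continuous_const.mul
          (Complex.continuous_ofReal.comp (continuous_fst.inner continuous_const)))
    have hbd : ∀ p : Euc n × Euc n,
        ‖Complex.exp (-(Complex.I) * Complex.ofReal ⟪p.1 - x, p.2⟫) *
          Complex.exp (-(Complex.I) * Complex.ofReal ⟪p.1, ξ⟫)‖ ≤ 1 := by
      intro p
      rw [norm_mul]
      have h1 : ∀ r : ℝ, ‖Complex.exp (-(Complex.I) * Complex.ofReal r)‖ = 1 := by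
        intro r
        rw [Complex.norm_exp]
        have : (-(Complex.I) * Complex.ofReal r).re = 0 := by simp
        rw [this, Real.exp_zero]
      rw [h1, h1, mul_one]
    have := base.bdd_mul hphase_cont.aestronglyMeasurable (ae_of_all _ hbd)
    apply this.congr
    filter_upwards with p
    simp only [hG, Function.uncurry]
    ring
  rw [MeasureTheory.integral_integral_swap hintG]
  congr 1
  congr 1
  ext η
  have key : ∀ y, G y η = A η * Complex.exp (Complex.I * Complex.ofReal ⟪x, η⟫) *
      (Complex.exp (-(Complex.I) * Complex.ofReal ⟪y, η + ξ⟫) * Ψ y) := by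
    intro y
    have e1 : Complex.exp (-(Complex.I) * Complex.ofReal ⟪y - x, η⟫)
        = Complex.exp (Complex.I * Complex.ofReal ⟪x, η⟫) *
          Complex.exp (-(Complex.I) * Complex.ofReal ⟪y, η⟫) := by
      rw [← Complex.exp_add]
      congr 1
      rw [inner_sub_left]
      push_cast
      ring
    have e2 : Complex.exp (-(Complex.I) * Complex.ofReal ⟪y, η + ξ⟫)
        = Complex.exp (-(Complex.I) * Complex.ofReal ⟪y, η⟫) *
          Complex.exp (-(Complex.I) * Complex.ofReal ⟪y, ξ⟫) := by
      rw [← Complex.exp_add]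
      congr 1
      rw [inner_add_right]
      push_cast
      ring
    simp only [hG]
    rw [e1, e2]
    ring
  calc (∫ y, G y η)
      = ∫ y, (A η * Complex.exp (Complex.I * Complex.ofReal ⟪x, η⟫)) *
          (Complex.exp (-(Complex.I) * Complex.ofReal ⟪y, η + ξ⟫) * Ψ y) := by
        congr 1; ext y; rw [key y]
    _ = A η * Complex.exp (Complex.I * Complex.ofReal ⟪x, η⟫) * FT ⇑Ψ (η + ξ) := by
        rw [MeasureTheory.integral_const_mul]
        rfl

end

noncomputable section
variable {n : ℕ}

lemma conj_mfun (t : ℝ) (η : Euc n) :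
    (starRingEnd ℂ) (mfun t η) = Complex.exp (Complex.I * (t : ℂ) * Complex.ofReal (‖η‖ ^ 2) / 2) := by
  unfold mfun
  rw [← Complex.exp_conj]
  congr 1
  rw [map_div₀, map_mul, map_mul]
  simp [Complex.conj_ofReal, map_ofNat]


end

end Aux

/-- for nonzero Schwartz `φ₀`, Schwartz `ψ` and `t ∈ ℝ`,
`W_{e^{−itH₀}φ₀}[e^{−itH₀}ψ](x,ξ) = e^{−it|ξ|²/2} W_{φ₀}ψ(x − tξ, ξ)`. -/
theorem stmt8 {n : ℕ} (hn : 1 ≤ n) (φ₀ : SchwartzMap (Euc n) ℂ) (hφ₀ : φ₀ ≠ 0)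
    (ψ : SchwartzMap (Euc n) ℂ) (t : ℝ) (x ξ : Euc n) :
    wpt (freeEv t ⇑φ₀) (freeEv t ⇑ψ) x ξ
      = Complex.exp (-(Complex.I) * (t : ℂ) * Complex.ofReal (‖ξ‖ ^ 2) / 2)
          * wpt ⇑φ₀ ⇑ψ (x - t • ξ) ξ := by

  rw [show Complex.exp (-(Complex.I) * (t : ℂ) * Complex.ofReal (‖ξ‖ ^ 2) / 2) = mfun t ξ from rfl]
  rw [← evS_coe t φ₀, ← evS_coe t ψ, wpt_repr, wpt_repr]
  rw [show mfun t ξ * ((((2 * π) ^ n : ℝ) : ℂ)⁻¹ *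
      ∫ η, (starRingEnd ℂ) (FT ⇑φ₀ η) * Complex.exp (Complex.I * Complex.ofReal ⟪x - t • ξ, η⟫)
        * FT ⇑ψ (η + ξ))
    = (((2 * π) ^ n : ℝ) : ℂ)⁻¹ *
      ∫ η, mfun t ξ * ((starRingEnd ℂ) (FT ⇑φ₀ η) *
        Complex.exp (Complex.I * Complex.ofReal ⟪x - t • ξ, η⟫) * FT ⇑ψ (η + ξ)) from by
    rw [MeasureTheory.integral_const_mul]; ring]
  congr 1
  congr 1
  ext η
  rw [FT_evS, FT_evS, map_mul]
  have hkey : (starRingEnd ℂ) (mfun t η) * mfun t (η + ξ) *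
      Complex.exp (Complex.I * Complex.ofReal ⟪x, η⟫)
      = mfun t ξ * Complex.exp (Complex.I * Complex.ofReal ⟪x - t • ξ, η⟫) := by
    rw [conj_mfun]
    unfold mfun
    have hn : (‖η + ξ‖ ^ 2 : ℝ) = ‖η‖ ^ 2 + 2 * ⟪η, ξ⟫ + ‖ξ‖ ^ 2 := norm_add_sq_real η ξ
    have hi : ⟪x - t • ξ, η⟫ = ⟪x, η⟫ - t * ⟪ξ, η⟫ := by
      rw [inner_sub_left, real_inner_smul_left]
    have hc : ⟪η, ξ⟫ = ⟪ξ, η⟫ := real_inner_comm ξ η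
    rw [← Complex.exp_add, ← Complex.exp_add, ← Complex.exp_add]
    congr 1
    rw [hn, hi, hc]
    push_cast
    ring
  calc (starRingEnd ℂ) (mfun t η) * (starRingEnd ℂ) (FT ⇑φ₀ η) *
        Complex.exp (Complex.I * Complex.ofReal ⟪x, η⟫) * (mfun t (η + ξ) * FT ⇑ψ (η + ξ))
      = ((starRingEnd ℂ) (mfun t η) * mfun t (η + ξ) *
          Complex.exp (Complex.I * Complex.ofReal ⟪x, η⟫)) *
        ((starRingEnd ℂ) (FT ⇑φ₀ η) * FT ⇑ψ (η + ξ)) := by ring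
    _ = (mfun t ξ * Complex.exp (Complex.I * Complex.ofReal ⟪x - t • ξ, η⟫)) *
        ((starRingEnd ℂ) (FT ⇑φ₀ η) * FT ⇑ψ (η + ξ)) := by rw [hkey]
    _ = mfun t ξ * ((starRingEnd ℂ) (FT ⇑φ₀ η) *
        Complex.exp (Complex.I * Complex.ofReal ⟪x - t • ξ, η⟫) * FT ⇑ψ (η + ξ)) := by ring
end
end
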